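/- Let w₁ ≥ w₂ ≥ … ≥ w_n > 0 and δ > 0. There exist reals v₁,…,v_n in a sufficiently large open interval such that −δ·Σ_{i=1}^{n−1} w_i < Σ_{i=1}^n w_i v_i < −δ·Σ_{i=1}^{n−2} w_i; moreover at the profile where agents 1,…,n−1 report v_i + δ and agent n reports v_n, the weighted sum Σ w_i of the shifted profile is positive, but decreasing any single agent i ∈ {1,…,n−1} back to v_i makes it negative. -/

import Mathlib

open Finset

/-- for decreasing positive weights and `δ > 0` there exist values
`v` with `-δ·Σ_{i=1}^{n-1} w_i < Σ w_i v_i < -δ·Σ_{i=1}^{n-2} w_i`; moreover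
these inequalities force the shifted profile `v^{{n}}` to have positive weighted
sum while lowering any single agent `i < n-1` back makes it negative. -/
theorem stmt_12 {n : ℕ} (hn : 2 ≤ n) (w : Fin n → ℝ)
    (hpos : ∀ i, 0 < w i) (hmono : ∀ i j : Fin n, i ≤ j → w j ≤ w i)
    (δ : ℝ) (hδ : 0 < δ) :
    ∃ v : Fin n → ℝ,
      (-δ * ∑ i ∈ Finset.univ.filter (fun i : Fin n => (i : ℕ) < n - 1), w i
          < ∑ i, w i * v i) ∧
      (∑ i, w i * v i
          < -δ * ∑ i ∈ Finset.univ.filter (fun i : Fin n => (i : ℕ) < n - 2), w i) ∧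
      (0 < ∑ i, w i * v i
          + δ * ∑ i ∈ Finset.univ.filter (fun i : Fin n => (i : ℕ) < n - 1), w i) ∧
      (∀ k : Fin n, (k : ℕ) < n - 1 →
        ∑ i, w i * v i
          + δ * ((∑ i ∈ Finset.univ.filter (fun i : Fin n => (i : ℕ) < n - 1), w i) - w k)
          < 0) := by
  have hj : n - 2 < n := by omega
  set j : Fin n := ⟨n - 2, hj⟩ with hjdef
  set A := ∑ i ∈ Finset.univ.filter (fun i : Fin n => (i : ℕ) < n - 1), w i with hA
  set B := ∑ i ∈ Finset.univ.filter (fun i : Fin n => (i : ℕ) < n - 2), w i with hB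
  have hfilt : Finset.univ.filter (fun i : Fin n => (i : ℕ) < n - 1)
      = insert j (Finset.univ.filter (fun i : Fin n => (i : ℕ) < n - 2)) := by
    ext i
    simp [Fin.ext_iff, hjdef]
    omega
  have hAB : A = w j + B := by
    rw [hA, hfilt, Finset.sum_insert (by simp [hjdef])]
  have hwj : 0 < w j := hpos j
  have hW : 0 < ∑ i, w i :=
    Finset.sum_pos (fun i _ => hpos i) ⟨j, Finset.mem_univ j⟩
  set t : ℝ := -δ * A + δ * w j / 2 with ht
  clear_value t A B j
  refine ⟨fun _ => t / (∑ i, w i), ?_, ?_, ?_, ?_⟩ <;>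
    rw [show (∑ i, w i * (t / (∑ i, w i))) = t by
      rw [← Finset.sum_mul]; field_simp]
  · nlinarith [mul_pos hδ hwj]
  · nlinarith [mul_pos hδ hwj]
  · nlinarith [mul_pos hδ hwj]
  · intro k hk
    have hkj : w j ≤ w k := hmono k j (by simp [Fin.le_def, hjdef]; omega)
    nlinarith [mul_le_mul_of_nonneg_left hkj hδ.le, mul_pos hδ hwj]
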